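/- arXiv:1810.04443 — 3 statements merged into one kernel-verified Lean document; each statement's English description precedes it below -/
import Mathlib

section
/- Let θ₀ ∈ ℝ, b ≠ 0, σ > 0, H ≥ 1, and let v₀, v₁, …, v_H be independent real random variables on a probability space (Ω, F, μ), each with Gaussian law N(0, σ²). Define θ̂(ω) = θ₀ + b⁻¹·(v₀(ω) - (1/H) Σ_{h=1}^H v_h(ω)). Then the law of ω ↦ (1 + 1/H)^{-1/2} · σ⁻¹ · b · (θ̂(ω) - θ₀) is the standard Gaussian N(0,1). (Exact one-dimensional instance of Theorem 3 / Proposition 4: for an auxiliary estimator with affine expectation bθ + const and Gaussian parameter-free noise, the normalized just-identified indirect-inference estimator is exactly standard normal.) -/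
open MeasureTheory ProbabilityTheory Real
open scoped NNReal ENNReal

section Conv

/-- Pointwise factorization of the product of two centered Gaussian densities. -/
lemma gaussian_pt_mul (p q : ℝ) (hp : 0 < p) (hq : 0 < q) (z x : ℝ) :
    ((Real.sqrt (2 * π * p))⁻¹ * Real.exp (-(x - 0) ^ 2 / (2 * p))) *
      ((Real.sqrt (2 * π * q))⁻¹ * Real.exp (-((z - x) - 0) ^ 2 / (2 * q)))
    = ((Real.sqrt (2 * π * (p + q)))⁻¹ * Real.exp (-(z - 0) ^ 2 / (2 * (p + q)))) *
      ((Real.sqrt (π / ((p + q) / (2 * p * q))))⁻¹ *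
        Real.exp (-((p + q) / (2 * p * q)) * (x - p * z / (p + q)) ^ 2)) := by
  have hpq : 0 < p + q := by linarith
  rw [mul_mul_mul_comm, mul_mul_mul_comm ((Real.sqrt (2 * π * (p + q)))⁻¹)]
  congr 1
  · rw [← mul_inv, ← mul_inv, ← Real.sqrt_mul (by positivity), ← Real.sqrt_mul (by positivity)]
    congr 1
    field_simp
  · rw [← Real.exp_add, ← Real.exp_add]
    congr 1
    field_simp
    ring

lemma gaussian_conv_integrand_eq (v₁ v₂ : ℝ≥0) (h1 : v₁ ≠ 0) (h2 : v₂ ≠ 0) (z : ℝ) :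
    ∀ x, gaussianPDFReal 0 v₁ x * gaussianPDFReal 0 v₂ (z - x)
      = gaussianPDFReal 0 (v₁ + v₂) z *
        ((Real.sqrt (π / (((v₁ : ℝ) + v₂) / (2 * v₁ * v₂))))⁻¹ *
          Real.exp (-((((v₁ : ℝ) + v₂)) / (2 * v₁ * v₂)) *
            (x - (v₁ : ℝ) * z / ((v₁ : ℝ) + v₂)) ^ 2)) := by
  intro x
  have hp : (0 : ℝ) < v₁ := lt_of_le_of_ne (v₁.coe_nonneg) (by exact_mod_cast (Ne.symm h1))
  have hq : (0 : ℝ) < v₂ := lt_of_le_of_ne (v₂.coe_nonneg) (by exact_mod_cast (Ne.symm h2))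
  have := gaussian_pt_mul (v₁ : ℝ) (v₂ : ℝ) hp hq z x
  simp only [gaussianPDFReal, NNReal.coe_add]
  exact this

lemma gaussian_conv_integrable (v₁ v₂ : ℝ≥0) (h1 : v₁ ≠ 0) (h2 : v₂ ≠ 0) (z : ℝ) :
    Integrable (fun x => gaussianPDFReal 0 v₁ x * gaussianPDFReal 0 v₂ (z - x)) := by
  have hp : (0 : ℝ) < v₁ := lt_of_le_of_ne (v₁.coe_nonneg) (by exact_mod_cast (Ne.symm h1))
  have hq : (0 : ℝ) < v₂ := lt_of_le_of_ne (v₂.coe_nonneg) (by exact_mod_cast (Ne.symm h2))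
  have ha : (0 : ℝ) < ((v₁ : ℝ) + v₂) / (2 * v₁ * v₂) := by positivity
  simp only [gaussian_conv_integrand_eq v₁ v₂ h1 h2 z]
  exact (((integrable_exp_neg_mul_sq ha).comp_sub_right
    ((v₁ : ℝ) * z / ((v₁ : ℝ) + v₂))).const_mul _).const_mul _

/-- The convolution identity for centered Gaussian densities (real form). -/
lemma gaussian_conv_real (v₁ v₂ : ℝ≥0) (h1 : v₁ ≠ 0) (h2 : v₂ ≠ 0) (z : ℝ) :
    ∫ x, gaussianPDFReal 0 v₁ x * gaussianPDFReal 0 v₂ (z - x)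
      = gaussianPDFReal 0 (v₁ + v₂) z := by
  have hp : (0 : ℝ) < v₁ := lt_of_le_of_ne (v₁.coe_nonneg) (by exact_mod_cast (Ne.symm h1))
  have hq : (0 : ℝ) < v₂ := lt_of_le_of_ne (v₂.coe_nonneg) (by exact_mod_cast (Ne.symm h2))
  set a : ℝ := ((v₁ : ℝ) + v₂) / (2 * v₁ * v₂) with ha_def
  have ha : (0 : ℝ) < a := by positivity
  set m : ℝ := (v₁ : ℝ) * z / ((v₁ : ℝ) + v₂) with hm_def
  simp only [gaussian_conv_integrand_eq v₁ v₂ h1 h2 z]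
  rw [integral_const_mul, integral_const_mul]
  have hint : ∫ x, Real.exp (-a * (x - m) ^ 2) = Real.sqrt (π / a) := by
    rw [integral_sub_right_eq_self (fun x => Real.exp (-a * x ^ 2)) m]
    exact integral_gaussian a
  rw [hint, inv_mul_cancel₀ (by positivity), mul_one]

/-- ENNReal version of the convolution identity. -/
lemma gaussian_conv_lintegral (v₁ v₂ : ℝ≥0) (h1 : v₁ ≠ 0) (h2 : v₂ ≠ 0) (z : ℝ) :
    ∫⁻ x, gaussianPDF 0 v₁ x * gaussianPDF 0 v₂ (z - x) = gaussianPDF 0 (v₁ + v₂) z := by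
  have heq : ∀ x, gaussianPDF 0 v₁ x * gaussianPDF 0 v₂ (z - x)
      = ENNReal.ofReal (gaussianPDFReal 0 v₁ x * gaussianPDFReal 0 v₂ (z - x)) := fun x =>
    (ENNReal.ofReal_mul (gaussianPDFReal_nonneg _ _ _)).symm
  simp only [heq]
  rw [← ofReal_integral_eq_lintegral_ofReal (gaussian_conv_integrable v₁ v₂ h1 h2 z)
    (Filter.Eventually.of_forall fun x =>
      mul_nonneg (gaussianPDFReal_nonneg _ _ _) (gaussianPDFReal_nonneg _ _ _)),
    gaussian_conv_real v₁ v₂ h1 h2 z]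
  rfl

/-- The sum of two independent centered Gaussians is Gaussian. -/
lemma gaussianReal_conv (v₁ v₂ : ℝ≥0) :
    Measure.map (fun p : ℝ × ℝ => p.1 + p.2) ((gaussianReal 0 v₁).prod (gaussianReal 0 v₂))
      = gaussianReal 0 (v₁ + v₂) := by
  by_cases h1 : v₁ = 0
  · subst h1
    rw [gaussianReal_zero_var, Measure.dirac_prod,
      Measure.map_map measurable_add measurable_prodMk_left]
    have : ((fun p : ℝ × ℝ => p.1 + p.2) ∘ Prod.mk (0 : ℝ)) = id := funext fun y => zero_add y
    rw [this, Measure.map_id, zero_add]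
  by_cases h2 : v₂ = 0
  · subst h2
    rw [gaussianReal_zero_var, Measure.prod_dirac,
      Measure.map_map measurable_add measurable_prodMk_right]
    have : ((fun p : ℝ × ℝ => p.1 + p.2) ∘ (fun x : ℝ => (x, (0 : ℝ)))) = id :=
      funext fun y => add_zero y
    rw [this, Measure.map_id, add_zero]
  have hadd : Measurable (fun p : ℝ × ℝ => p.1 + p.2) := measurable_add
  have hg₁ := measurable_gaussianPDF 0 v₁
  have hg₂ := measurable_gaussianPDF 0 v₂
  ext s hs
  rw [Measure.map_apply hadd hs, Measure.prod_apply (hadd hs)]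
  have hslice : ∀ x : ℝ,
      gaussianReal 0 v₂ (Prod.mk x ⁻¹' ((fun p : ℝ × ℝ => p.1 + p.2) ⁻¹' s))
        = ∫⁻ z in s, gaussianPDF 0 v₂ (z - x) := by
    intro x
    have hpre : Prod.mk x ⁻¹' ((fun p : ℝ × ℝ => p.1 + p.2) ⁻¹' s)
        = (fun y : ℝ => x + y) ⁻¹' s := rfl
    have hms : MeasurableSet ((fun y : ℝ => x + y) ⁻¹' s) := (measurable_const_add x) hs
    rw [hpre, gaussianReal_of_var_ne_zero 0 h2, withDensity_apply _ hms,
      ← lintegral_indicator hms, ← lintegral_indicator hs]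
    have hfun : ∀ y : ℝ,
        Set.indicator ((fun y : ℝ => x + y) ⁻¹' s) (gaussianPDF 0 v₂) y
          = Set.indicator s (fun z => gaussianPDF 0 v₂ (z - x)) (x + y) := by
      intro y
      by_cases hy : x + y ∈ s
      · rw [Set.indicator_of_mem hy, Set.indicator_of_mem (by exact hy), add_sub_cancel_left]
      · rw [Set.indicator_of_notMem hy, Set.indicator_of_notMem (by exact hy)]
    calc ∫⁻ y, Set.indicator ((fun y : ℝ => x + y) ⁻¹' s) (gaussianPDF 0 v₂) y
        = ∫⁻ y, Set.indicator s (fun z => gaussianPDF 0 v₂ (z - x)) (x + y) :=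
          lintegral_congr hfun
      _ = ∫⁻ z, Set.indicator s (fun z => gaussianPDF 0 v₂ (z - x)) z :=
          lintegral_add_left_eq_self _ x
  rw [lintegral_congr hslice, gaussianReal_of_var_ne_zero 0 h1]
  have hF : Measurable fun x : ℝ => ∫⁻ z in s, gaussianPDF 0 v₂ (z - x) := by
    apply Measurable.lintegral_prod_right (f := fun x z => gaussianPDF 0 v₂ (z - x))
    exact hg₂.comp (measurable_snd.sub measurable_fst)
  rw [lintegral_withDensity_eq_lintegral_mul _ hg₁ hF]
  have hswap : ∫⁻ x, (gaussianPDF 0 v₁ * fun x => ∫⁻ z in s, gaussianPDF 0 v₂ (z - x)) x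
      = ∫⁻ z in s, ∫⁻ x, gaussianPDF 0 v₁ x * gaussianPDF 0 v₂ (z - x) := by
    have : ∀ x : ℝ, (gaussianPDF 0 v₁ * fun x => ∫⁻ z in s, gaussianPDF 0 v₂ (z - x)) x
        = ∫⁻ z in s, gaussianPDF 0 v₁ x * gaussianPDF 0 v₂ (z - x) := by
      intro x
      simp only [Pi.mul_apply]
      exact (lintegral_const_mul _ (hg₂.comp (measurable_id.sub measurable_const))).symm
    rw [lintegral_congr this]
    exact lintegral_lintegral_swap
      ((hg₁.comp measurable_fst).mul (hg₂.comp (measurable_snd.sub measurable_fst))).aemeasurable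
  rw [hswap]
  have hvs : v₁ + v₂ ≠ 0 := by
    simp only [ne_eq, add_eq_zero]
    exact fun h => h1 h.1
  rw [gaussianReal_of_var_ne_zero 0 hvs, withDensity_apply _ hs]
  exact setLIntegral_congr_fun hs
    (fun z _ => gaussian_conv_lintegral v₁ v₂ h1 h2 z)

end Conv

section SumGaussian

variable {Ω : Type*} [MeasurableSpace Ω]

/-- The sum of finitely many independent centered Gaussians is Gaussian. -/
lemma map_sum_gaussian (μ : Measure Ω) [IsProbabilityMeasure μ] {ι : Type*}
    (X : ι → Ω → ℝ) (hm : ∀ i, Measurable (X i))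
    (hind : iIndepFun X μ) (w : ι → ℝ≥0)
    (hlaw : ∀ i, Measure.map (X i) μ = gaussianReal 0 (w i)) (s : Finset ι) :
    Measure.map (fun ω => ∑ i ∈ s, X i ω) μ = gaussianReal 0 (∑ i ∈ s, w i) := by
  classical
  induction s using Finset.induction_on with
  | empty =>
      simp only [Finset.sum_empty]
      rw [gaussianReal_zero_var, Measure.map_const, measure_univ, one_smul]
  | @insert i s hi ih =>
      simp only [Finset.sum_insert hi]
      have hS : Measurable (fun ω => ∑ j ∈ s, X j ω) := by
        apply Finset.measurable_sum
        exact fun j _ => hm j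
      have hIndep : IndepFun (X i) (fun ω => ∑ j ∈ s, X j ω) μ := by
        have h := (hind.indepFun_finsetSum_of_notMem hm hi).symm
        have hfun : (∑ j ∈ s, X j) = fun ω => ∑ j ∈ s, X j ω := by
          funext ω; simp [Finset.sum_apply]
        rwa [hfun] at h
      have hprod : Measure.map (fun ω => (X i ω, ∑ j ∈ s, X j ω)) μ
          = (gaussianReal 0 (w i)).prod (gaussianReal 0 (∑ j ∈ s, w j)) := by
        rw [← hlaw i, ← ih]
        exact (indepFun_iff_map_prod_eq_prod_map_map (hm i).aemeasurable
          hS.aemeasurable).mp hIndep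
      have hcomp : (fun ω => X i ω + ∑ j ∈ s, X j ω)
          = (fun p : ℝ × ℝ => p.1 + p.2) ∘ (fun ω => (X i ω, ∑ j ∈ s, X j ω)) := rfl
      rw [hcomp, ← Measure.map_map measurable_add ((hm i).prodMk hS), hprod,
        gaussianReal_conv]

end SumGaussian

open MeasureTheory ProbabilityTheory
open scoped NNReal
open Fin.NatCast

/-- One-dimensional exact instance of Theorem 3 / Proposition 4: for the auxiliary
estimator with affine expectation `bθ + const` and Gaussian `N(0, σ²)` parameter-free
noise `v₀, v₁, …, v_H` (independent), the just-identified indirect-inference estimator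
`θ̂ = θ₀ + b⁻¹ (v₀ - (1/H) Σ_{h=1}^H v_h)` satisfies
`(1 + 1/H)^{-1/2} σ⁻¹ b (θ̂ - θ₀) ∼ N(0, 1)` exactly. -/
theorem jie_exact_normal_1d {Ω : Type*} [MeasurableSpace Ω]
    (μ : Measure Ω) [IsProbabilityMeasure μ]
    (θ₀ b : ℝ) (hb : b ≠ 0) (σ : ℝ≥0) (hσ : 0 < σ) (H : ℕ) (hH : 1 ≤ H)
    (v : Fin (H + 1) → Ω → ℝ) (hmeas : ∀ i, Measurable (v i))
    (hindep : iIndepFun v μ)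
    (hlaw : ∀ i, Measure.map (v i) μ = gaussianReal 0 (σ ^ 2))
    (θhat : Ω → ℝ)
    (hθhat : ∀ ω, θhat ω =
      θ₀ + b⁻¹ * (v 0 ω - (1 / (H : ℝ)) * ∑ h ∈ Finset.Icc 1 H, v (h : Fin (H + 1)) ω)) :
    Measure.map
        (fun ω => (1 + 1 / (H : ℝ)) ^ (-(1 / 2 : ℝ)) * (σ : ℝ)⁻¹ * b * (θhat ω - θ₀)) μ
      = gaussianReal 0 1 := by
  classical
  have hHpos : (0 : ℝ) < H := by exact_mod_cast Nat.lt_of_lt_of_le Nat.zero_lt_one hH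
  have hHne : (H : ℝ) ≠ 0 := ne_of_gt hHpos
  have hσR : (0 : ℝ) < σ := hσ
  set c : ℝ := (1 + 1 / (H : ℝ)) ^ (-(1 / 2 : ℝ)) * (σ : ℝ)⁻¹ with hc_def
  set a : Fin (H + 1) → ℝ := fun i => if i = 0 then c else -(c / H) with ha_def
  set X : Fin (H + 1) → Ω → ℝ := fun i ω => a i * v i ω with hX_def
  have hmX : ∀ i, Measurable (X i) := fun i => (hmeas i).const_mul (a i)
  have hindX : iIndepFun X μ := by
    have := hindep.comp (fun i => fun x : ℝ => a i * x) (fun i => measurable_const_mul (a i))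
    exact this
  set w : Fin (H + 1) → ℝ≥0 := fun i => ⟨(a i) ^ 2, sq_nonneg _⟩ * σ ^ 2 with hw_def
  have hlawX : ∀ i, Measure.map (X i) μ = gaussianReal 0 (w i) := by
    intro i
    have : X i = (fun x : ℝ => a i * x) ∘ v i := rfl
    rw [this, ← Measure.map_map (measurable_const_mul (a i)) (hmeas i), hlaw i,
      gaussianReal_map_const_mul]
    simp [hw_def]
    rfl
  have hmap := map_sum_gaussian μ X hmX hindX w hlawX Finset.univ
  -- sum of variances is 1
  have hx : (0 : ℝ) < 1 + 1 / (H : ℝ) := by positivity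
  have hc2 : c ^ 2 = (1 + 1 / (H : ℝ))⁻¹ * ((σ : ℝ)⁻¹) ^ 2 := by
    rw [hc_def, mul_pow]
    congr 1
    rw [← Real.rpow_natCast ((1 + 1 / (H : ℝ)) ^ (-(1 / 2 : ℝ))) 2,
      ← Real.rpow_mul (le_of_lt hx)]
    norm_num
    exact Real.rpow_neg_one _
  have hsum_a : ∑ i : Fin (H + 1), (a i) ^ 2 = c ^ 2 * (1 + 1 / (H : ℝ)) := by
    rw [Fin.sum_univ_succ]
    have h0 : a 0 = c := by simp [ha_def]
    have hsucc : ∀ i : Fin H, a i.succ = -(c / H) := by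
      intro i
      simp [ha_def, Fin.succ_ne_zero]
    rw [h0]
    have : ∀ i : Fin H, (a i.succ) ^ 2 = (c / H) ^ 2 := by
      intro i; rw [hsucc i]; ring
    rw [Finset.sum_congr rfl fun i _ => this i, Finset.sum_const, Finset.card_univ,
      Fintype.card_fin, nsmul_eq_mul]
    field_simp
  have hwsum : ∑ i : Fin (H + 1), w i = 1 := by
    have hcoe : ((∑ i : Fin (H + 1), w i : ℝ≥0) : ℝ) = (1 : ℝ) := by
      push_cast
      have : ∀ i : Fin (H + 1), ((w i : ℝ≥0) : ℝ) = (a i) ^ 2 * (σ : ℝ) ^ 2 := by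
        intro i; simp [hw_def]
        show a i ^ 2 * ((σ ^ 2 : ℝ≥0) : ℝ) = _
        rw [NNReal.coe_pow]
      rw [Finset.sum_congr rfl fun i _ => this i, ← Finset.sum_mul, hsum_a, hc2]
      field_simp
    exact_mod_cast hcoe
  rw [hwsum] at hmap
  -- identify the mapped functions
  have hfun_eq : (fun ω => (1 + 1 / (H : ℝ)) ^ (-(1 / 2 : ℝ)) * (σ : ℝ)⁻¹ * b * (θhat ω - θ₀))
      = fun ω => ∑ i : Fin (H + 1), X i ω := by
    funext ω
    have hsum_shift : ∑ h ∈ Finset.Icc 1 H, v (h : Fin (H + 1)) ω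
        = ∑ i : Fin H, v i.succ ω := by
      have h1 : Finset.Icc 1 H = Finset.Ico 1 (H + 1) := by
        rw [Finset.Ico_add_one_right_eq_Icc]
      rw [h1, Finset.sum_Ico_eq_sum_range]
      simp only [Nat.add_sub_cancel]
      rw [← Fin.sum_univ_eq_sum_range (fun j => v ((1 + j : ℕ) : Fin (H + 1)) ω) H]
      apply Finset.sum_congr rfl
      intro i _
      congr 1
      apply Fin.ext
      rw [Fin.val_cast_of_lt (by omega : 1 + (i : ℕ) < H + 1)]
      simp [Fin.val_succ]
      omega
    have hXsum : ∑ i : Fin (H + 1), X i ω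
        = c * v 0 ω - (c / H) * ∑ i : Fin H, v i.succ ω := by
      rw [Fin.sum_univ_succ]
      have h0 : X 0 ω = c * v 0 ω := by simp [hX_def, ha_def]
      have hsucc : ∀ i : Fin H, X i.succ ω = -(c / H) * v i.succ ω := by
        intro i; simp [hX_def, ha_def, Fin.succ_ne_zero]
      rw [h0, Finset.sum_congr rfl fun i _ => hsucc i, ← Finset.mul_sum]
      ring
    rw [hXsum, hθhat ω, hsum_shift, add_sub_cancel_left]
    have hkey : ∀ E : ℝ, c * b * (b⁻¹ * E) = c * E := fun E => by
      field_simp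
    rw [hkey]
    ring
  rw [hfun_eq]
  exact hmap
end

section
/- Let p ≥ 1, let Θ ⊆ ℝ^p be compact with θ₀ ∈ Θ, let (Ω, F, μ) be a probability space, let B be an invertible real p×p matrix, let r : ℝ^p → ℝ^p be continuous, let θ̂ : Ω → Θ be measurable, and let u : Ω → ℝ^p be Bochner-integrable with ∫ u dμ = 0. Assume that for μ-almost every ω, B·(θ̂(ω) - θ₀) + r(θ̂(ω)) - r(θ₀) = u(ω). Then θ̂ is integrable, ∫ (θ̂ - θ₀) dμ = -B⁻¹ ∫ (r(θ̂(ω)) - r(θ₀)) dμ(ω), and ‖∫ (θ̂ - θ₀) dμ‖₂ ≤ ‖B⁻¹‖_op · sup_{θ ∈ Θ} ‖r(θ) - r(θ₀)‖₂, where ‖B⁻¹‖_op is the operator norm of B⁻¹ with respect to ‖·‖₂. (The bias identity and first-order bias bound, equations (C.2)–(C.3), established in the proof of Proposition 2: the bias of the just-identified indirect-inference estimator is controlled by the nonlinear remainder r of the auxiliary estimator's bias.) -/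
open MeasureTheory

/-- Bias identity and first-order bias bound (equations (C.2)–(C.3) in the proof of
Proposition 2): if `B(θ̂ - θ₀) + r(θ̂) - r(θ₀) = u` almost surely with `B` invertible,
`r` continuous, `θ̂` taking values in a compact set `Θ` and `u` zero-mean integrable,
then `θ̂` is integrable, `∫ (θ̂ - θ₀) dμ = -B⁻¹ ∫ (r(θ̂) - r(θ₀)) dμ`, and
`‖∫ (θ̂ - θ₀) dμ‖₂ ≤ ‖B⁻¹‖_op · sup_{θ ∈ Θ} ‖r(θ) - r(θ₀)‖₂`. -/
theorem jie_bias_identity_and_bound (p : ℕ) (hp : 1 ≤ p)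
    (Θ : Set (EuclideanSpace ℝ (Fin p))) (hΘ : IsCompact Θ)
    (θ₀ : EuclideanSpace ℝ (Fin p)) (hθ₀ : θ₀ ∈ Θ)
    {Ω : Type*} [MeasurableSpace Ω] (μ : Measure Ω) [IsProbabilityMeasure μ]
    (B : Matrix (Fin p) (Fin p) ℝ) (hB : IsUnit B)
    (r : EuclideanSpace ℝ (Fin p) → EuclideanSpace ℝ (Fin p)) (hr : Continuous r)
    (θhat : Ω → EuclideanSpace ℝ (Fin p)) (hmeas : Measurable θhat)
    (hran : ∀ ω, θhat ω ∈ Θ)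
    (u : Ω → EuclideanSpace ℝ (Fin p)) (hu : Integrable u μ)
    (huzero : ∫ ω, u ω ∂μ = 0)
    (heq : ∀ᵐ ω ∂μ,
      Matrix.toEuclideanLin B (θhat ω - θ₀) + r (θhat ω) - r θ₀ = u ω) :
    Integrable θhat μ ∧
    (∫ ω, (θhat ω - θ₀) ∂μ)
      = - Matrix.toEuclideanLin B⁻¹ (∫ ω, (r (θhat ω) - r θ₀) ∂μ) ∧
    ‖∫ ω, (θhat ω - θ₀) ∂μ‖
      ≤ ‖LinearMap.toContinuousLinearMap (Matrix.toEuclideanLin B⁻¹)‖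
        * ⨆ θ : Θ, ‖r θ - r θ₀‖ := by
  -- bounds from compactness
  obtain ⟨C, hC⟩ := hΘ.isBounded.exists_norm_le
  have hrΘ : IsCompact (r '' Θ) := hΘ.image hr
  obtain ⟨D, hD⟩ := hrΘ.isBounded.exists_norm_le
  -- integrability of θhat
  have hθi : Integrable θhat μ :=
    ⟨hmeas.aestronglyMeasurable,
      HasFiniteIntegral.of_bounded (C := C) (ae_of_all _ fun ω => hC _ (hran ω))⟩
  have hθsub : Integrable (fun ω => θhat ω - θ₀) μ := hθi.sub (integrable_const _)
  have hrmeas : Measurable fun ω => r (θhat ω) := hr.measurable.comp hmeas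
  have hri0 : Integrable (fun ω => r (θhat ω)) μ :=
    ⟨hrmeas.aestronglyMeasurable,
      HasFiniteIntegral.of_bounded (C := D) (ae_of_all _ fun ω =>
        hD _ ⟨θhat ω, hran ω, rfl⟩)⟩
  have hri : Integrable (fun ω => r (θhat ω) - r θ₀) μ := hri0.sub (integrable_const _)
  -- continuous linear maps
  set T := LinearMap.toContinuousLinearMap (Matrix.toEuclideanLin B)
  set S := LinearMap.toContinuousLinearMap (Matrix.toEuclideanLin B⁻¹)
  have hdet : IsUnit B.det := (Matrix.isUnit_iff_isUnit_det B).mp hB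
  have hST : ∀ x, S (T x) = x := by
    intro x
    have h1 : Matrix.toEuclideanLin B⁻¹ (Matrix.toEuclideanLin B x)
        = Matrix.toEuclideanLin (B⁻¹ * B) x := by
      rw [Matrix.toEuclideanLin_eq_toLin,
        Matrix.toLin_mul _ (PiLp.basisFun 2 ℝ (Fin p)) _]
      simp
    simp only [S, T, LinearMap.coe_toContinuousLinearMap']
    rw [h1, Matrix.nonsing_inv_mul B hdet]
    simp [Matrix.toEuclideanLin_apply]
  -- integral identity
  have key : T (∫ ω, (θhat ω - θ₀) ∂μ) = - ∫ ω, (r (θhat ω) - r θ₀) ∂μ := by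
    rw [← ContinuousLinearMap.integral_comp_comm T hθsub]
    have : ∫ ω, T (θhat ω - θ₀) ∂μ
        = ∫ ω, (u ω - (r (θhat ω) - r θ₀)) ∂μ := by
      refine integral_congr_ae ?_
      filter_upwards [heq] with ω hω
      have : T (θhat ω - θ₀) = u ω - (r (θhat ω) - r θ₀) := by
        simp only [T, LinearMap.coe_toContinuousLinearMap']
        rw [← hω]; abel
      simp [this]
    rw [this, integral_sub hu hri, huzero, zero_sub]
  have hident : (∫ ω, (θhat ω - θ₀) ∂μ)
      = - Matrix.toEuclideanLin B⁻¹ (∫ ω, (r (θhat ω) - r θ₀) ∂μ) := by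
    have := congrArg S key
    rw [hST] at this
    rw [this]
    simp [S]
  refine ⟨hθi, hident, ?_⟩
  -- the bound
  have hne : Θ.Nonempty := ⟨θ₀, hθ₀⟩
  haveI : Nonempty Θ := hne.to_subtype
  have hbdd : BddAbove (Set.range fun θ : Θ => ‖r θ - r θ₀‖) := by
    refine ⟨D + ‖r θ₀‖, ?_⟩
    rintro x ⟨θ, rfl⟩
    calc ‖r θ - r θ₀‖ ≤ ‖r (θ : EuclideanSpace ℝ (Fin p))‖ + ‖r θ₀‖ := norm_sub_le _ _
      _ ≤ D + ‖r θ₀‖ := by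
          gcongr; exact hD _ ⟨θ, θ.2, rfl⟩
  have hnorm : ‖∫ ω, (r (θhat ω) - r θ₀) ∂μ‖ ≤ ⨆ θ : Θ, ‖r θ - r θ₀‖ := by
    have h1 : ‖∫ ω, (r (θhat ω) - r θ₀) ∂μ‖
        ≤ (⨆ θ : Θ, ‖r θ - r θ₀‖) * (μ Set.univ).toReal :=
      norm_integral_le_of_norm_le_const (ae_of_all _ fun ω =>
        le_ciSup hbdd (⟨θhat ω, hran ω⟩ : Θ))
    simpa using h1
  calc ‖∫ ω, (θhat ω - θ₀) ∂μ‖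
      = ‖S (∫ ω, (r (θhat ω) - r θ₀) ∂μ)‖ := by
        rw [hident]; simp [S]
    _ ≤ ‖S‖ * ‖∫ ω, (r (θhat ω) - r θ₀) ∂μ‖ := S.le_opNorm _
    _ ≤ ‖S‖ * ⨆ θ : Θ, ‖r θ - r θ₀‖ := by
        gcongr
end

section
/- Fix p ≥ 1, a compact set Θ ⊆ ℝ^p with θ₀ ∈ Θ, and a probability space (Ω, F, μ). Let a : ℝ^p → ℝ^p be continuous and such that the binding function θ ↦ θ + a(θ) is injective on Θ. For each n ∈ ℕ, n ≥ 1, let Lₙ be a real p×p matrix and rₙ : ℝ^p → ℝ^p a function, and suppose there exist constants C > 0, β > 0, γ > 0 such that ‖Lₙ v‖₂ ≤ C n^{-β} ‖v‖₂ for all v ∈ ℝ^p and sup_{θ ∈ Θ} ‖rₙ(θ)‖₂ ≤ C n^{-γ} for all n. For each n let θ̂ₙ : Ω → Θ and eₙ : Ω → ℝ^p be measurable with, for μ-almost every ω, θ̂ₙ(ω) + a(θ̂ₙ(ω)) + Lₙ θ̂ₙ(ω) + rₙ(θ̂ₙ(ω)) = θ₀ + a(θ₀) + Lₙ θ₀ +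 rₙ(θ₀) + eₙ(ω), and suppose there exists α > 0 such that for every δ > 0 there is M > 0 with μ(‖eₙ‖₂ > M n^{-α}) ≤ δ for all n ≥ 1. Then θ̂ₙ is a consistent estimator of θ₀: for every ε > 0 and every δ > 0 there exists n* such that for all n ≥ n*, μ(‖θ̂ₙ - θ₀‖₂ ≥ ε) ≤ δ. (Fixed-dimension form of Proposition 3 / Theorem 2: consistency of the just-identified indirect-inference estimator computed by the iterative bootstrap.) -/
open MeasureTheory

/-- Fixed-dimension form of Proposition 3 / Theorem 2: consistency of the just-identified
indirect-inference estimator. With `Θ` compact, binding function `θ + a(θ)` injective on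
`Θ`, linear finite-sample bias `Lₙ` of operator norm `O(n^{-β})`, nonlinear remainder `rₙ`
uniformly `O(n^{-γ})` on `Θ`, and noise `eₙ` of order `O_p(n^{-α})`, the estimators `θ̂ₙ`
solving the indirect-inference equation are consistent for `θ₀`. -/
theorem jie_consistency (p : ℕ) (hp : 1 ≤ p)
    (Θ : Set (EuclideanSpace ℝ (Fin p))) (hΘ : IsCompact Θ)
    (θ₀ : EuclideanSpace ℝ (Fin p)) (hθ₀ : θ₀ ∈ Θ)
    {Ω : Type*} [MeasurableSpace Ω] (μ : Measure Ω) [IsProbabilityMeasure μ]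
    (a : EuclideanSpace ℝ (Fin p) → EuclideanSpace ℝ (Fin p)) (ha : Continuous a)
    (hinj : Set.InjOn (fun θ => θ + a θ) Θ)
    (L : ℕ → Matrix (Fin p) (Fin p) ℝ)
    (r : ℕ → EuclideanSpace ℝ (Fin p) → EuclideanSpace ℝ (Fin p))
    (C β γ α : ℝ) (hC : 0 < C) (hβ : 0 < β) (hγ : 0 < γ) (hα : 0 < α)
    (hL : ∀ n : ℕ, 1 ≤ n → ∀ v : EuclideanSpace ℝ (Fin p),
      ‖Matrix.toEuclideanLin (L n) v‖ ≤ C * (n : ℝ) ^ (-β) * ‖v‖)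
    (hr : ∀ n : ℕ, 1 ≤ n → ∀ θ ∈ Θ, ‖r n θ‖ ≤ C * (n : ℝ) ^ (-γ))
    (θhat : ℕ → Ω → EuclideanSpace ℝ (Fin p)) (hmeas : ∀ n, Measurable (θhat n))
    (hran : ∀ n ω, θhat n ω ∈ Θ)
    (e : ℕ → Ω → EuclideanSpace ℝ (Fin p))
    (heq : ∀ n : ℕ, 1 ≤ n → ∀ᵐ ω ∂μ,
      θhat n ω + a (θhat n ω) + Matrix.toEuclideanLin (L n) (θhat n ω) + r n (θhat n ω)
        = θ₀ + a θ₀ + Matrix.toEuclideanLin (L n) θ₀ + r n θ₀ + e n ω)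
    (he : ∀ δ : ℝ, 0 < δ → ∃ M : ℝ, 0 < M ∧ ∀ n : ℕ, 1 ≤ n →
      μ {ω | M * (n : ℝ) ^ (-α) < ‖e n ω‖} ≤ ENNReal.ofReal δ) :
    ∀ ε : ℝ, 0 < ε → ∀ δ : ℝ, 0 < δ → ∃ nstar : ℕ, ∀ n : ℕ, nstar ≤ n →
      μ {ω | ε ≤ ‖θhat n ω - θ₀‖} ≤ ENNReal.ofReal δ := by
  intro ε hε δ hδ
  -- bound the diameter of Θ around θ₀
  obtain ⟨D, hD⟩ := hΘ.isBounded.subset_closedBall θ₀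
  set K : Set (EuclideanSpace ℝ (Fin p)) := Θ ∩ {θ | ε ≤ ‖θ - θ₀‖} with hKdef
  by_cases hK : K.Nonempty
  · -- continuous binding function
    have hb : Continuous fun θ : EuclideanSpace ℝ (Fin p) =>
        ‖(θ + a θ) - (θ₀ + a θ₀)‖ :=
      ((continuous_id.add ha).sub continuous_const).norm
    have hKc : IsCompact K :=
      hΘ.inter_right (isClosed_le continuous_const
        ((continuous_id.sub continuous_const).norm))
    obtain ⟨θ₁, hθ₁K, hmin⟩ := hKc.exists_isMinOn hK hb.continuousOn
    set η : ℝ := ‖(θ₁ + a θ₁) - (θ₀ + a θ₀)‖ with hηdef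
    have hθ₁Θ : θ₁ ∈ Θ := hθ₁K.1
    have hθ₁ne : θ₁ ≠ θ₀ := by
      intro h
      have := hθ₁K.2
      rw [h] at this
      simp only [sub_self, norm_zero, Set.mem_setOf_eq] at this
      linarith
    have hη : 0 < η := by
      rw [hηdef, norm_pos_iff, sub_ne_zero]
      intro h
      exact hθ₁ne (hinj hθ₁Θ hθ₀ h)
    -- key separation property
    have hsep : ∀ θ ∈ Θ, ‖(θ + a θ) - (θ₀ + a θ₀)‖ < η → ‖θ - θ₀‖ < ε := by
      intro θ hθ hlt
      by_contra hcon
      push_neg at hcon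
      have hθK : θ ∈ K := ⟨hθ, hcon⟩
      have := hmin hθK
      simp only [Set.mem_setOf_eq] at this
      exact absurd hlt (not_lt.mpr this)
    obtain ⟨M, hM, hMbound⟩ := he δ hδ
    -- the deterministic bound tends to 0
    have h1 : Filter.Tendsto (fun n : ℕ => (n : ℝ) ^ (-β)) Filter.atTop (nhds 0) :=
      (tendsto_rpow_neg_atTop hβ).comp tendsto_natCast_atTop_atTop
    have h2 : Filter.Tendsto (fun n : ℕ => (n : ℝ) ^ (-γ)) Filter.atTop (nhds 0) :=
      (tendsto_rpow_neg_atTop hγ).comp tendsto_natCast_atTop_atTop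
    have h3 : Filter.Tendsto (fun n : ℕ => (n : ℝ) ^ (-α)) Filter.atTop (nhds 0) :=
      (tendsto_rpow_neg_atTop hα).comp tendsto_natCast_atTop_atTop
    have hsum : Filter.Tendsto
        (fun n : ℕ => C * (n : ℝ) ^ (-β) * D + 2 * C * (n : ℝ) ^ (-γ)
          + M * (n : ℝ) ^ (-α)) Filter.atTop (nhds 0) := by
      have := (((h1.const_mul C).mul_const D).add (h2.const_mul (2 * C))).add
        (h3.const_mul M)
      simpa using this
    have hev : ∀ᶠ n : ℕ in Filter.atTop,
        C * (n : ℝ) ^ (-β) * D + 2 * C * (n : ℝ) ^ (-γ) + M * (n : ℝ) ^ (-α) < η := by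
      have := hsum.eventually (eventually_lt_nhds hη)
      simpa using this
    obtain ⟨N, hN⟩ := hev.exists_forall_of_atTop
    refine ⟨max N 1, fun n hn => ?_⟩
    have hn1 : 1 ≤ n := le_trans (le_max_right N 1) hn
    have hnN : N ≤ n := le_trans (le_max_left N 1) hn
    -- a.e. inclusion of events
    have hincl : {ω | ε ≤ ‖θhat n ω - θ₀‖} ≤ᵐ[μ] {ω | M * (n : ℝ) ^ (-α) < ‖e n ω‖} := by
      filter_upwards [heq n hn1] with ω hω
      intro hωmem
      by_contra hcon
      -- rearrange the equation
      have he' : e n ω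
          = (θhat n ω + a (θhat n ω) + Matrix.toEuclideanLin (L n) (θhat n ω)
              + r n (θhat n ω))
            - (θ₀ + a θ₀ + Matrix.toEuclideanLin (L n) θ₀ + r n θ₀) := by
        rw [hω]; abel
      have key : (θhat n ω + a (θhat n ω)) - (θ₀ + a θ₀)
          = Matrix.toEuclideanLin (L n) (θ₀ - θhat n ω)
            + (r n θ₀ - r n (θhat n ω)) + e n ω := by
        rw [he', map_sub]; abel
      have hDθ : ‖θ₀ - θhat n ω‖ ≤ D := by
        have := hD (hran n ω)
        rw [Metric.mem_closedBall] at this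
        rw [norm_sub_rev]
        simpa [dist_eq_norm] using this
      have hLb : ‖Matrix.toEuclideanLin (L n) (θ₀ - θhat n ω)‖
          ≤ C * (n : ℝ) ^ (-β) * D := by
        refine le_trans (hL n hn1 _) ?_
        have hpos : (0 : ℝ) ≤ C * (n : ℝ) ^ (-β) := by positivity
        exact mul_le_mul_of_nonneg_left hDθ hpos
      have hrb : ‖r n θ₀ - r n (θhat n ω)‖ ≤ 2 * C * (n : ℝ) ^ (-γ) := by
        refine le_trans (norm_sub_le _ _) ?_
        have h1' := hr n hn1 θ₀ hθ₀
        have h2' := hr n hn1 (θhat n ω) (hran n ω)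
        linarith
      have hnorm : ‖(θhat n ω + a (θhat n ω)) - (θ₀ + a θ₀)‖
          ≤ C * (n : ℝ) ^ (-β) * D + 2 * C * (n : ℝ) ^ (-γ) + M * (n : ℝ) ^ (-α) := by
        rw [key]
        refine le_trans (norm_add₃_le) ?_
        gcongr
        exact le_of_not_gt hcon
      have hlt : ‖(θhat n ω + a (θhat n ω)) - (θ₀ + a θ₀)‖ < η :=
        lt_of_le_of_lt hnorm (hN n hnN)
      exact absurd hωmem (not_le.mpr (hsep _ (hran n ω) hlt))
    exact le_trans (measure_mono_ae hincl) (hMbound n hn1)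
  · -- K empty: the event is always empty
    refine ⟨1, fun n hn => ?_⟩
    have hempty : {ω | ε ≤ ‖θhat n ω - θ₀‖} = ∅ := by
      ext ω
      simp only [Set.mem_setOf_eq, Set.mem_empty_iff_false, iff_false, not_le]
      by_contra hcon
      push_neg at hcon
      exact hK ⟨θhat n ω, hran n ω, hcon⟩
    rw [hempty]
    simp
end
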